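/- There exist absolute constants c, C > 0 such that for all functions b, β that are finite linear combinations of Haar functions and every fixed choice of signs σ ∈ {−1,+1}^𝒟, the operator norm of P^{0,0}_{b,1} T_σ P^{0,1}_{β,0} on L²(ℝ) is independent of σ and satisfies c · ‖{⟨b,h¹_I⟩⟨β,h_I⟩/|I|}‖_Carl ≤ ‖P^{0,0}_{b,1} T_σ P^{0,1}_{β,0}‖_{2→2} ≤ C · ‖{⟨b,h¹_I⟩⟨β,h_I⟩/|I|}‖_Carl. -/

import Mathlib

open MeasureTheory ProbabilityTheory Real Filter
open scoped ENNReal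

attribute [local instance] Classical.propDecidable

noncomputable section

namespace RandomParaproducts

/-- Dyadic intervals: `(n, k)` represents `[k·2ⁿ, (k+1)·2ⁿ)`. -/
abbrev D : Type := ℤ × ℤ

/-- The length `2ⁿ` of the dyadic interval `(n, k)`. -/
def len (I : D) : ℝ := (2 : ℝ) ^ I.1

/-- The dyadic interval `[k·2ⁿ, (k+1)·2ⁿ)` as a subset of `ℝ`. -/
def ival (I : D) : Set ℝ := Set.Ico ((I.2 : ℝ) * (2 : ℝ) ^ I.1) (((I.2 : ℝ) + 1) * (2 : ℝ) ^ I.1)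

/-- The left half of a dyadic interval. -/
def lc (I : D) : D := (I.1 - 1, 2 * I.2)

/-- The right half of a dyadic interval. -/
def rc (I : D) : D := (I.1 - 1, 2 * I.2 + 1)

/-- The `L²`-normalized Haar function `h_I = h⁰_I`. -/
def haar (I : D) : ℝ → ℝ := fun x =>
  (Real.sqrt (len I))⁻¹ *
    ((ival (rc I)).indicator (fun _ => (1 : ℝ)) x - (ival (lc I)).indicator (fun _ => (1 : ℝ)) x)

/-- The function `h¹_I = |h_I| = |I|^{-1/2} 1_I`. -/
def haar1 (I : D) : ℝ → ℝ := fun x =>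
  (Real.sqrt (len I))⁻¹ * (ival I).indicator (fun _ => (1 : ℝ)) x

/-- `h^ε_I`, where `false` codes the exponent `0` and `true` codes the exponent `1`. -/
def hfun : Bool → D → ℝ → ℝ
  | false => haar
  | true => haar1

/-- The inner product `⟨f, g⟩ = ∫ f g` on `L²(ℝ)`. -/
def ip (f g : ℝ → ℝ) : ℝ := ∫ x, f x * g x

/-- The paraproduct `P^{ε,δ}_b f = ∑_I b_I ⟨f, h^δ_I⟩ h^ε_I` with finitely supported
numerical symbol `b`. -/
def P (e d : Bool) (b : D →₀ ℝ) (f : ℝ → ℝ) : ℝ → ℝ := fun x =>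
  ∑ I ∈ b.support, b I * ip f (hfun d I) * hfun e I x

/-- The signed paraproduct `P^{σ,ε,δ}_b f = ∑_I σ_I b_I ⟨f, h^δ_I⟩ h^ε_I`. -/
def Psig (σ : D → ℝ) (e d : Bool) (b : D →₀ ℝ) (f : ℝ → ℝ) : ℝ → ℝ := fun x =>
  ∑ I ∈ b.support, σ I * (b I * ip f (hfun d I) * hfun e I x)

/-- The square of the `L²(ℝ)` norm, `‖g‖₂² = ∫ g²`. -/
def l2normSq (g : ℝ → ℝ) : ℝ := ∫ x, (g x) ^ 2

/-- The Carleson norm of a sequence `a` whose nonzero entries lie in the finite set `s`: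
`sup_J (|J|⁻¹ ∑_{I ⊆ J} a_I² |I|)^{1/2}`. -/
def carlOn (s : Finset D) (a : D → ℝ) : ℝ :=
  ⨆ J : D, Real.sqrt ((len J)⁻¹ *
    ∑ I ∈ s.filter (fun I => ival I ⊆ ival J), (a I) ^ 2 * len I)

/-- `μ` is the law of independent uniformly distributed random signs `{σ_I : I ∈ 𝒟}`. -/
def IsSignMeasure (μ : Measure (D → ℝ)) : Prop :=
  IsProbabilityMeasure μ ∧
    iIndepFun (fun I σ => σ I) μ ∧
    ∀ I : D, μ.map (fun σ => σ I) =
      (2⁻¹ : ℝ≥0∞) • (Measure.dirac (1 : ℝ) + Measure.dirac (-1 : ℝ))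

/-- `f` is a unit vector of `L²(ℝ)`. -/
def UnitL2 (f : ℝ → ℝ) : Prop := MemLp f 2 volume ∧ eLpNorm f 2 volume = 1

/-- The operator norm on `L²(ℝ)` of a map defined on functions. -/
def opNorm (T : (ℝ → ℝ) → ℝ → ℝ) : ℝ :=
  ⨆ f : {f : ℝ → ℝ // UnitL2 f}, Real.sqrt (l2normSq (T f.1))

/-- The averaged operator norm `sup_{‖f‖₂ = 1} (𝔼 ‖T_σ f‖₂²)^{1/2}`. -/
def avgOpNorm (μ : Measure (D → ℝ)) (T : (D → ℝ) → (ℝ → ℝ) → ℝ → ℝ) : ℝ :=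
  ⨆ f : {f : ℝ → ℝ // UnitL2 f}, Real.sqrt (∫ σ, l2normSq (T σ f.1) ∂μ)

/-- `b` is the finite linear combination of Haar functions with coefficients `c`. -/
def FinHaar (b : ℝ → ℝ) (c : D →₀ ℝ) : Prop :=
  b = fun x => ∑ I ∈ c.support, c I * haar I x

/-- The paraproduct `P^{ε,γ}_{b,α} f = ∑_{I} (⟨b, h^α_I⟩/|I|^{1/2}) ⟨f, h^γ_I⟩ h^ε_I` with
function symbol `b`, the sum extended over a finite set `s` containing all the
nonvanishing terms. -/
def Pb (s : Finset D) (e g a : Bool) (b : ℝ → ℝ) (f : ℝ → ℝ) : ℝ → ℝ := fun x =>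
  ∑ I ∈ s, (ip b (hfun a I) / Real.sqrt (len I)) * ip f (hfun g I) * hfun e I x

lemma measurableSet_ival (I : D) : MeasurableSet (ival I) := measurableSet_Ico

lemma volume_ival_ne_top (I : D) : volume (ival I) ≠ ⊤ := by
  simp only [ival, Real.volume_Ico]; exact ENNReal.ofReal_ne_top

lemma memℒp_haar (I : D) : MemLp (haar I) 2 volume := by
  have h1 : MemLp ((ival (rc I)).indicator (fun _ => (1 : ℝ))) 2 volume :=
    memLp_indicator_const 2 (measurableSet_ival _) 1 (Or.inr (volume_ival_ne_top _))
  have h2 : MemLp ((ival (lc I)).indicator (fun _ => (1 : ℝ))) 2 volume :=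
    memLp_indicator_const 2 (measurableSet_ival _) 1 (Or.inr (volume_ival_ne_top _))
  exact ((h1.sub h2).const_mul ((Real.sqrt (len I))⁻¹))

/-- The Haar function `h_I` as an element of `L²(ℝ)`. -/
def haarLp (I : D) : Lp ℝ 2 (volume : Measure ℝ) := (memℒp_haar I).toLp (haar I)

/-- The random Haar multiplier `T_σ f = ∑_{I ∈ 𝒟} σ_I ⟨f, h_I⟩ h_I`, as an element of
`L²(ℝ)`; the (infinite) sum converges unconditionally in `L²`. -/
def Tfull (σ : D → ℝ) (g : ℝ → ℝ) : Lp ℝ 2 (volume : Measure ℝ) :=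
  ∑' I : D, (σ I * ip g (haar I)) • haarLp I

/-- The composition `M_b T_σ M_β` applied to `f`, as a function. -/
def MbTM (σ : D → ℝ) (b β f : ℝ → ℝ) : ℝ → ℝ := fun x =>
  b x * (Tfull σ fun y => β y * f y) x


/-! ### Basic facts about dyadic intervals -/

lemma len_pos (I : D) : 0 < len I := zpow_pos (by norm_num) _

lemma sqrt_len_pos (I : D) : 0 < Real.sqrt (len I) := Real.sqrt_pos.2 (len_pos I)

lemma ival_lt (I : D) : (I.2 : ℝ) * 2 ^ I.1 < ((I.2 : ℝ) + 1) * 2 ^ I.1 := by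
  have := len_pos I; unfold len at this; nlinarith

lemma ival_nonempty (I : D) : (ival I).Nonempty :=
  ⟨(I.2 : ℝ) * 2 ^ I.1, le_refl _, ival_lt I⟩

lemma volume_ival (I : D) : volume (ival I) = ENNReal.ofReal (len I) := by
  rw [ival, Real.volume_Ico]; congr 1; unfold len; ring

lemma two_zpow_split (n : ℤ) : (2:ℝ) ^ n = 2 ^ (n - 1) * 2 := by
  rw [← zpow_add_one₀ (two_ne_zero : (2:ℝ) ≠ 0)]; norm_num

lemma len_lc (I : D) : len (lc I) = len I / 2 := by
  unfold len lc; simp only []; rw [two_zpow_split I.1]; ring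

lemma len_rc (I : D) : len (rc I) = len I / 2 := by
  unfold len rc; simp only []; rw [two_zpow_split I.1]; ring

lemma endpoint_eqs (I : D) :
    (I.2 : ℝ) * 2 ^ I.1 = (2 * (I.2 : ℝ)) * 2 ^ (I.1 - 1) ∧
    (I.2 : ℝ) * 2 ^ I.1 + 2 ^ (I.1 - 1) = (2 * (I.2 : ℝ) + 1) * 2 ^ (I.1 - 1) ∧
    ((I.2 : ℝ) + 1) * 2 ^ I.1 = (2 * (I.2 : ℝ) + 1 + 1) * 2 ^ (I.1 - 1) := by
  have h2 := two_zpow_split I.1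
  refine ⟨by linear_combination (I.2 : ℝ) * h2, by linear_combination (I.2 : ℝ) * h2,
    by linear_combination ((I.2 : ℝ) + 1) * h2⟩

lemma ival_lc (I : D) : ival (lc I) =
    Set.Ico ((I.2 : ℝ) * 2 ^ I.1) ((I.2 : ℝ) * 2 ^ I.1 + 2 ^ (I.1 - 1)) := by
  obtain ⟨e1, e2, e3⟩ := endpoint_eqs I
  ext x
  simp only [ival, lc, Set.mem_Ico]
  push_cast
  constructor <;> rintro ⟨a, b⟩ <;> exact ⟨by linarith, by linarith⟩

lemma ival_rc (I : D) : ival (rc I) =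
    Set.Ico ((I.2 : ℝ) * 2 ^ I.1 + 2 ^ (I.1 - 1)) (((I.2 : ℝ) + 1) * 2 ^ I.1) := by
  obtain ⟨e1, e2, e3⟩ := endpoint_eqs I
  ext x
  simp only [ival, rc, Set.mem_Ico]
  push_cast
  constructor <;> rintro ⟨a, b⟩ <;> exact ⟨by linarith, by linarith⟩

lemma ival_union (I : D) : ival (lc I) ∪ ival (rc I) = ival I := by
  rw [ival_lc, ival_rc, ival]
  have h2 := two_zpow_split I.1
  have hp : (0:ℝ) < 2 ^ (I.1 - 1) := zpow_pos (by norm_num) _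
  exact Set.Ico_union_Ico_eq_Ico (by nlinarith) (by nlinarith)

lemma ival_disj (I : D) : Disjoint (ival (lc I)) (ival (rc I)) := by
  rw [ival_lc, ival_rc]
  rw [Set.Ico_disjoint_Ico]
  exact le_trans (min_le_left _ _) (le_max_right _ _)

lemma ival_lc_subset (I : D) : ival (lc I) ⊆ ival I := by
  rw [← ival_union I]; exact Set.subset_union_left

lemma ival_rc_subset (I : D) : ival (rc I) ⊆ ival I := by
  rw [← ival_union I]; exact Set.subset_union_right

lemma len_le_of_subset {I J : D} (h : ival I ⊆ ival J) : len I ≤ len J := by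
  have := measure_mono (μ := volume) h
  rw [volume_ival, volume_ival] at this
  exact (ENNReal.ofReal_le_ofReal_iff (len_pos J).le).1 this

lemma scale_le_of_subset {I J : D} (h : ival I ⊆ ival J) : I.1 ≤ J.1 := by
  have := len_le_of_subset h
  unfold len at this
  exact (zpow_le_zpow_iff_right₀ (by norm_num : (1:ℝ) < 2)).1 this

lemma subset_endpoints {I J : D} (h : ival I ⊆ ival J) :
    (J.2 : ℝ) * 2 ^ J.1 ≤ (I.2 : ℝ) * 2 ^ I.1 ∧
      ((I.2 : ℝ) + 1) * 2 ^ I.1 ≤ ((J.2 : ℝ) + 1) * 2 ^ J.1 := by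
  rw [ival, ival, Set.Ico_subset_Ico_iff (ival_lt I)] at h
  exact h

lemma eq_of_subset_of_scale_eq {I J : D} (h : ival I ⊆ ival J) (hs : I.1 = J.1) : I = J := by
  obtain ⟨h1, h2⟩ := subset_endpoints h
  rw [hs] at h1 h2
  have hp : (0:ℝ) < 2 ^ J.1 := zpow_pos (by norm_num) _
  have : (I.2 : ℝ) = J.2 := by nlinarith
  have : I.2 = J.2 := by exact_mod_cast this
  exact Prod.ext hs this

lemma ival_inj {I J : D} (h : ival I = ival J) : I = J := by
  have h1 : ival I ⊆ ival J := h.le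
  have h2 : ival J ⊆ ival I := h.ge
  exact eq_of_subset_of_scale_eq h1 (le_antisymm (scale_le_of_subset h1) (scale_le_of_subset h2))

lemma nested_or_disjoint (I J : D) (h : I.1 ≤ J.1) :
    ival I ⊆ ival J ∨ Disjoint (ival I) (ival J) := by
  obtain ⟨n, k⟩ := I; obtain ⟨m, l⟩ := J
  simp only at h
  set p : ℕ := (m - n).toNat with hp
  have hmn : m = n + (p : ℤ) := by omega
  have h2 : (2:ℝ) ^ m = ((2 ^ p : ℤ) : ℝ) * 2 ^ n := by
    push_cast
    rw [hmn, zpow_add₀ (two_ne_zero : (2:ℝ) ≠ 0), zpow_natCast]; ring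
  have hpow : (0:ℝ) < 2 ^ n := zpow_pos (by norm_num) _
  by_cases h1 : k < l * 2 ^ p
  · -- I lies to the left of J
    right
    rw [ival, ival, Set.Ico_disjoint_Ico]
    have h3 : (k : ℤ) + 1 ≤ l * 2 ^ p := Int.add_one_le_iff.mpr h1
    have h4 : ((k : ℝ) + 1) ≤ ((l * 2 ^ p : ℤ) : ℝ) := by exact_mod_cast h3
    have hkl : ((k : ℝ) + 1) * 2 ^ n ≤ (l : ℝ) * 2 ^ m := by
      calc ((k : ℝ) + 1) * 2 ^ n ≤ ((l * 2 ^ p : ℤ) : ℝ) * 2 ^ n := by nlinarith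
        _ = (l : ℝ) * 2 ^ m := by rw [h2]; push_cast; ring
    exact le_trans (min_le_left _ _) (le_trans hkl (le_max_right _ _))
  · by_cases hk : k < (l + 1) * 2 ^ p
    · -- containment
      left
      push_neg at h1
      rintro x ⟨hx1, hx2⟩
      have h4 : ((l * 2 ^ p : ℤ) : ℝ) ≤ (k : ℝ) := by exact_mod_cast h1
      have h5 : ((k : ℝ) + 1) ≤ (((l + 1) * 2 ^ p : ℤ) : ℝ) := by
        exact_mod_cast Int.add_one_le_iff.mpr hk
      constructor
      · calc (l : ℝ) * 2 ^ m = ((l * 2 ^ p : ℤ) : ℝ) * 2 ^ n := by rw [h2]; push_cast; ring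
          _ ≤ (k : ℝ) * 2 ^ n := by nlinarith
          _ ≤ x := hx1
      · calc x < ((k : ℝ) + 1) * 2 ^ n := hx2
          _ ≤ (((l + 1) * 2 ^ p : ℤ) : ℝ) * 2 ^ n := by nlinarith
          _ = ((l : ℝ) + 1) * 2 ^ m := by rw [h2]; push_cast; ring
    · -- I lies to the right of J
      right
      rw [ival, ival, Set.Ico_disjoint_Ico]
      push_neg at hk
      have h4 : (((l + 1) * 2 ^ p : ℤ) : ℝ) ≤ (k : ℝ) := by exact_mod_cast hk
      have hkl : ((l : ℝ) + 1) * 2 ^ m ≤ (k : ℝ) * 2 ^ n := by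
        calc ((l : ℝ) + 1) * 2 ^ m = (((l + 1) * 2 ^ p : ℤ) : ℝ) * 2 ^ n := by
              rw [h2]; push_cast; ring
          _ ≤ (k : ℝ) * 2 ^ n := by nlinarith
      exact le_trans (min_le_right _ _) (le_trans hkl (le_max_left _ _))

/-- Trichotomy for a dyadic subinterval: it is the whole interval or lies in a half. -/
lemma subset_child_or_eq {I J : D} (h : ival I ⊆ ival J) :
    ival I ⊆ ival (lc J) ∨ ival I ⊆ ival (rc J) ∨ I = J := by
  by_cases hs : I.1 = J.1
  · exact Or.inr (Or.inr (eq_of_subset_of_scale_eq h hs))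
  · have hlt : I.1 ≤ J.1 - 1 := by have := scale_le_of_subset h; omega
    have hl := nested_or_disjoint I (lc J) hlt
    have hr := nested_or_disjoint I (rc J) hlt
    rcases hl with hl | hl
    · exact Or.inl hl
    rcases hr with hr | hr
    · exact Or.inr (Or.inl hr)
    · exfalso
      have hsub : ival I ⊆ ival (lc J) ∪ ival (rc J) := by rw [ival_union]; exact h
      obtain ⟨x, hx⟩ := ival_nonempty I
      rcases hsub hx with hx' | hx'
      · exact (Set.disjoint_left.1 hl) hx hx'
      · exact (Set.disjoint_left.1 hr) hx hx'


/-! ### Pointwise values, measurability and integrability of Haar functions -/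

lemma haar_eq_of_mem_lc {I : D} {x : ℝ} (hx : x ∈ ival (lc I)) :
    haar I x = -(Real.sqrt (len I))⁻¹ := by
  have hx' : x ∉ ival (rc I) := fun h => Set.disjoint_left.1 (ival_disj I) hx h
  simp [haar, Set.indicator_of_mem hx, Set.indicator_of_notMem hx']

lemma haar_eq_of_mem_rc {I : D} {x : ℝ} (hx : x ∈ ival (rc I)) :
    haar I x = (Real.sqrt (len I))⁻¹ := by
  have hx' : x ∉ ival (lc I) := fun h => Set.disjoint_left.1 (ival_disj I) h hx
  simp [haar, Set.indicator_of_mem hx, Set.indicator_of_notMem hx']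

lemma haar_eq_zero_of_not_mem {I : D} {x : ℝ} (hx : x ∉ ival I) : haar I x = 0 := by
  have h1 : x ∉ ival (lc I) := fun h => hx (ival_lc_subset I h)
  have h2 : x ∉ ival (rc I) := fun h => hx (ival_rc_subset I h)
  simp [haar, Set.indicator_of_notMem h1, Set.indicator_of_notMem h2]

lemma mem_lc_or_rc {I : D} {x : ℝ} (hx : x ∈ ival I) :
    x ∈ ival (lc I) ∨ x ∈ ival (rc I) := by
  rw [← ival_union I] at hx; exact hx

lemma abs_haar_le (I : D) (x : ℝ) :
    |haar I x| ≤ (Real.sqrt (len I))⁻¹ * (ival I).indicator (fun _ => (1:ℝ)) x := by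
  by_cases hx : x ∈ ival I
  · rw [Set.indicator_of_mem hx]
    rcases mem_lc_or_rc hx with h | h
    · rw [haar_eq_of_mem_lc h, abs_neg, abs_of_nonneg (by positivity)]; ring_nf; rfl
    · rw [haar_eq_of_mem_rc h, abs_of_nonneg (by positivity)]; ring_nf; rfl
  · rw [haar_eq_zero_of_not_mem hx, Set.indicator_of_notMem hx]; simp

lemma abs_haar_le' (I : D) (x : ℝ) : |haar I x| ≤ (Real.sqrt (len I))⁻¹ := by
  refine (abs_haar_le I x).trans ?_
  by_cases hx : x ∈ ival I
  · rw [Set.indicator_of_mem hx]; simp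
  · rw [Set.indicator_of_notMem hx]; simp [le_of_lt (inv_pos.2 (sqrt_len_pos I))]

lemma measurable_haar (I : D) : Measurable (haar I) := by
  unfold haar
  exact (((measurable_const.indicator (measurableSet_ival (rc I))).sub
    (measurable_const.indicator (measurableSet_ival (lc I)))).const_mul _)

lemma measurable_haar1 (I : D) : Measurable (haar1 I) := by
  unfold haar1
  exact ((measurable_const.indicator (measurableSet_ival I)).const_mul _)

lemma integrable_indicator_one (I : D) :
    Integrable ((ival I).indicator fun _ => (1:ℝ)) volume := by
  rw [integrable_indicator_iff (measurableSet_ival I)]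
  exact integrableOn_const (volume_ival_ne_top I)

lemma integral_indicator_one (I : D) :
    ∫ x, (ival I).indicator (fun _ => (1:ℝ)) x = len I := by
  rw [integral_indicator (measurableSet_ival I), setIntegral_const, smul_eq_mul, mul_one,
    measureReal_def, volume_ival, ENNReal.toReal_ofReal (len_pos I).le]

lemma integrable_haar (I : D) : Integrable (haar I) volume := by
  unfold haar
  exact ((integrable_indicator_one (rc I)).sub (integrable_indicator_one (lc I))).const_mul _

lemma integrable_haar1 (I : D) : Integrable (haar1 I) volume := by
  unfold haar1
  exact (integrable_indicator_one I).const_mul _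

lemma integral_haar (I : D) : ∫ x, haar I x = 0 := by
  unfold haar
  rw [integral_const_mul,
    integral_sub (integrable_indicator_one (rc I)) (integrable_indicator_one (lc I)),
    integral_indicator_one, integral_indicator_one, len_lc, len_rc]
  ring

lemma integrable_haar_mul (I J : D) :
    Integrable (fun x => haar I x * haar J x) volume := by
  refine Integrable.mono'
    (((integrable_indicator_one I).const_mul ((Real.sqrt (len I))⁻¹ * (Real.sqrt (len J))⁻¹)))
    (((measurable_haar I).mul (measurable_haar J)).aestronglyMeasurable) ?_
  refine Filter.Eventually.of_forall fun x => ?_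
  rw [Real.norm_eq_abs, abs_mul]
  calc |haar I x| * |haar J x| ≤
      ((Real.sqrt (len I))⁻¹ * (ival I).indicator (fun _ => (1:ℝ)) x) * (Real.sqrt (len J))⁻¹ :=
        mul_le_mul (abs_haar_le I x) (abs_haar_le' J x) (abs_nonneg _)
          (mul_nonneg (by positivity) (Set.indicator_nonneg (fun _ _ => zero_le_one) x))
    _ = (Real.sqrt (len I))⁻¹ * (Real.sqrt (len J))⁻¹ * (ival I).indicator (fun _ => (1:ℝ)) x := by
        ring

/-! ### Orthonormality of the Haar system -/

lemma haar_mul_self (I : D) (x : ℝ) :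
    haar I x * haar I x = (len I)⁻¹ * (ival I).indicator (fun _ => (1:ℝ)) x := by
  by_cases hx : x ∈ ival I
  · rw [Set.indicator_of_mem hx, mul_one]
    have hs : Real.sqrt (len I) * Real.sqrt (len I) = len I :=
      Real.mul_self_sqrt (len_pos I).le
    rcases mem_lc_or_rc hx with h | h
    · rw [haar_eq_of_mem_lc h]
      field_simp
      rw [Real.sq_sqrt (len_pos I).le]
    · rw [haar_eq_of_mem_rc h]
      field_simp
      rw [Real.sq_sqrt (len_pos I).le]
  · rw [haar_eq_zero_of_not_mem hx, Set.indicator_of_notMem hx]; ring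

lemma integral_haar_mul_self (I : D) : ∫ x, haar I x * haar I x = 1 := by
  have : (fun x => haar I x * haar I x)
      = fun x => (len I)⁻¹ * (ival I).indicator (fun _ => (1:ℝ)) x := by
    funext x; exact haar_mul_self I x
  rw [this, integral_const_mul, integral_indicator_one, inv_mul_cancel₀ (len_pos I).ne']

lemma integral_haar_mul_of_ne_aux {I J : D} (hIJ : I ≠ J) (hs : I.1 ≤ J.1) :
    ∫ x, haar I x * haar J x = 0 := by
  rcases nested_or_disjoint I J hs with hsub | hdisj
  · rcases subset_child_or_eq hsub with hl | hr | heq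
    · have : (fun x => haar I x * haar J x) = fun x => -(Real.sqrt (len J))⁻¹ * haar I x := by
        funext x
        by_cases hx : x ∈ ival I
        · rw [haar_eq_of_mem_lc (hl hx)]; ring
        · rw [haar_eq_zero_of_not_mem hx]; ring
      rw [this, integral_const_mul, integral_haar, mul_zero]
    · have : (fun x => haar I x * haar J x) = fun x => (Real.sqrt (len J))⁻¹ * haar I x := by
        funext x
        by_cases hx : x ∈ ival I
        · rw [haar_eq_of_mem_rc (hr hx)]; ring
        · rw [haar_eq_zero_of_not_mem hx]; ring
      rw [this, integral_const_mul, integral_haar, mul_zero]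
    · exact absurd heq hIJ
  · have : (fun x => haar I x * haar J x) = fun _ => (0:ℝ) := by
      funext x
      by_cases hx : x ∈ ival I
      · rw [haar_eq_zero_of_not_mem (Set.disjoint_left.1 hdisj hx), mul_zero]
      · rw [haar_eq_zero_of_not_mem hx, zero_mul]
    rw [this, integral_zero]

lemma integral_haar_mul_of_ne {I J : D} (hIJ : I ≠ J) : ∫ x, haar I x * haar J x = 0 := by
  rcases le_total I.1 J.1 with h | h
  · exact integral_haar_mul_of_ne_aux hIJ h
  · have : (fun x => haar I x * haar J x) = fun x => haar J x * haar I x := by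
      funext x; ring
    rw [this]; exact integral_haar_mul_of_ne_aux (Ne.symm hIJ) h


/-! ### Inner products with Haar functions and the key identity -/

lemma ip_haar1_eq (f : ℝ → ℝ) (I : D) :
    ip f (haar1 I) = (Real.sqrt (len I))⁻¹ * ∫ x in ival I, f x := by
  unfold ip haar1
  have h : (fun x => f x * ((Real.sqrt (len I))⁻¹ * (ival I).indicator (fun _ => (1:ℝ)) x))
      = fun x => (Real.sqrt (len I))⁻¹ * (ival I).indicator f x := by
    funext x
    by_cases hx : x ∈ ival I
    · rw [Set.indicator_of_mem hx, Set.indicator_of_mem hx]; ring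
    · rw [Set.indicator_of_notMem hx, Set.indicator_of_notMem hx]; ring
  rw [h, integral_const_mul, integral_indicator (measurableSet_ival I)]

lemma ip_sum_haar (S : Finset D) (c : D → ℝ) (K : D) :
    ip (fun x => ∑ I ∈ S, c I * haar I x) (haar K) = if K ∈ S then c K else 0 := by
  unfold ip
  have h1 : (fun x => (∑ I ∈ S, c I * haar I x) * haar K x)
      = fun x => ∑ I ∈ S, c I * (haar I x * haar K x) := by
    funext x; rw [Finset.sum_mul]; exact Finset.sum_congr rfl fun I _ => by ring
  rw [h1, integral_finset_sum _ fun I _ => (integrable_haar_mul I K).const_mul _]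
  have h2 : ∀ I ∈ S, ∫ x, c I * (haar I x * haar K x)
      = c I * ∫ x, haar I x * haar K x := fun I _ => integral_const_mul _ _
  rw [Finset.sum_congr rfl h2]
  by_cases hK : K ∈ S
  · rw [Finset.sum_eq_single_of_mem K hK (fun I _ hne => by
      rw [integral_haar_mul_of_ne hne, mul_zero]), integral_haar_mul_self, if_pos hK, mul_one]
  · rw [if_neg hK]
    exact Finset.sum_eq_zero fun I hI => by
      rw [integral_haar_mul_of_ne (by rintro rfl; exact hK hI), mul_zero]

lemma integrable_sum_haar_mul (S : Finset D) (c : D → ℝ) (K : D) :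
    Integrable (fun x => (∑ I ∈ S, c I * haar I x) * haar K x) volume := by
  have h1 : (fun x => (∑ I ∈ S, c I * haar I x) * haar K x)
      = fun x => ∑ I ∈ S, c I * (haar I x * haar K x) := by
    funext x; rw [Finset.sum_mul]; exact Finset.sum_congr rfl fun I _ => by ring
  rw [h1]
  exact integrable_finset_sum _ fun I _ => (integrable_haar_mul I K).const_mul _

lemma l2normSq_sum (S : Finset D) (c : D → ℝ) :
    l2normSq (fun x => ∑ I ∈ S, c I * haar I x) = ∑ I ∈ S, c I ^ 2 := by
  unfold l2normSq
  have h1 : (fun x => (∑ I ∈ S, c I * haar I x) ^ 2)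
      = fun x => ∑ K ∈ S, c K * ((∑ I ∈ S, c I * haar I x) * haar K x) := by
    funext x
    rw [sq, Finset.mul_sum]
    exact Finset.sum_congr rfl fun K _ => by ring
  rw [h1, integral_finset_sum _ fun K _ => (integrable_sum_haar_mul S c K).const_mul _]
  refine Finset.sum_congr rfl fun K hK => ?_
  rw [integral_const_mul]
  have h2 := ip_sum_haar S c K
  unfold ip at h2
  rw [h2, if_pos hK, sq]

lemma coeFn_sum_haarLp (S : Finset D) (c : D → ℝ) :
    (↑↑(∑ K ∈ S, c K • haarLp K) : ℝ → ℝ) =ᵐ[volume] fun x => ∑ K ∈ S, c K * haar K x := by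
  classical
  induction S using Finset.induction_on with
  | empty =>
      simp only [Finset.sum_empty]
      filter_upwards [Lp.coeFn_zero (E := ℝ) (p := 2) (μ := (volume : Measure ℝ))] with x h
      simpa using h
  | @insert a s hni ih =>
      rw [Finset.sum_insert hni]
      filter_upwards [Lp.coeFn_add (c a • haarLp a) (∑ K ∈ s, c K • haarLp K),
        Lp.coeFn_smul (c a) (haarLp a), (memℒp_haar a).coeFn_toLp, ih] with x h1 h2 h3 h4
      rw [h1, Pi.add_apply, h2, Pi.smul_apply, smul_eq_mul,
        show (↑↑(haarLp a) : ℝ → ℝ) x = haar a x from h3, h4, Finset.sum_insert hni]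

lemma Tfull_eq_sum (σ : D → ℝ) (S : Finset D) (g : ℝ → ℝ)
    (hg : ∀ K ∉ S, ip g (haar K) = 0) :
    Tfull σ g = ∑ K ∈ S, (σ K * ip g (haar K)) • haarLp K :=
  tsum_eq_sum fun K hK => by rw [hg K hK, mul_zero, zero_smul]

lemma ip_congr_left {g g' : ℝ → ℝ} (h : g =ᵐ[volume] g') (φ : ℝ → ℝ) : ip g φ = ip g' φ := by
  unfold ip
  exact integral_congr_ae (h.mono fun x hx => by simp only [hx])

/-- The key identity: the square of the `L²` norm of the composed operator applied to `f`. -/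
lemma key_identity (b β : ℝ → ℝ) (s S : Finset D) (hsS : s ⊆ S)
    (σ : D → ℝ) (hσ : ∀ I, σ I = 1 ∨ σ I = -1) (f : ℝ → ℝ) :
    l2normSq (Pb S false false true b (⇑(Tfull σ (Pb s false true false β f))))
      = ∑ I ∈ s,
          (ip b (haar1 I) * ip β (haar I) / len I) ^ 2 * (ip f (haar1 I)) ^ 2 := by
  classical
  set d : D → ℝ := fun J => ip β (haar J) / Real.sqrt (len J) * ip f (haar1 J) with hd
  have hinner : Pb s false true false β f = fun x => ∑ J ∈ s, d J * haar J x := rfl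
  have hipg : ∀ K, ip (Pb s false true false β f) (haar K) = if K ∈ s then d K else 0 := by
    intro K; rw [hinner]; exact ip_sum_haar s d K
  have hT : Tfull σ (Pb s false true false β f) = ∑ K ∈ s, (σ K * d K) • haarLp K := by
    rw [Tfull_eq_sum σ s _ (fun K hK => by rw [hipg K, if_neg hK])]
    exact Finset.sum_congr rfl fun K hK => by rw [hipg K, if_pos hK]
  have hcoe : (↑↑(Tfull σ (Pb s false true false β f)) : ℝ → ℝ) =ᵐ[volume]
      fun x => ∑ K ∈ s, (σ K * d K) * haar K x := by
    rw [hT]; exact coeFn_sum_haarLp s _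
  have hipG : ∀ K, ip (⇑(Tfull σ (Pb s false true false β f))) (haar K)
      = if K ∈ s then σ K * d K else 0 := by
    intro K; rw [ip_congr_left hcoe, ip_sum_haar]
  set c : D → ℝ :=
    fun I => ip b (haar1 I) / Real.sqrt (len I) * (if I ∈ s then σ I * d I else 0) with hc
  have houter : Pb S false false true b (⇑(Tfull σ (Pb s false true false β f)))
      = fun x => ∑ I ∈ S, c I * haar I x := by
    funext x
    refine Finset.sum_congr rfl fun I _ => ?_
    show ip b (hfun true I) / Real.sqrt (len I)
        * ip (⇑(Tfull σ (Pb s false true false β f))) (hfun false I) * hfun false I x = _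
    simp only [hfun]
    rw [hipG I, hc]
  rw [houter, l2normSq_sum]
  rw [← Finset.sum_subset hsS (fun I _ hI => by simp [hc, if_neg hI])]
  refine Finset.sum_congr rfl fun I hI => ?_
  have hss : Real.sqrt (len I) * Real.sqrt (len I) = len I := Real.mul_self_sqrt (len_pos I).le
  have hσ2 : σ I ^ 2 = 1 := by rcases hσ I with h | h <;> rw [h] <;> norm_num
  simp only [hc, hd, if_pos hI]
  set u := Real.sqrt (len I) with hu
  have hune : u ≠ 0 := (sqrt_len_pos I).ne'
  rw [← hss]
  field_simp
  ring_nf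
  rw [hσ2]
  ring


/-! ### L² integral identities and Cauchy-Schwarz -/

lemma integrableOn_of_L2 {f : ℝ → ℝ} (hf : MemLp f 2 volume) (I : D) :
    IntegrableOn f (ival I) volume := by
  have : IsFiniteMeasure (volume.restrict (ival I)) :=
    ⟨by rw [Measure.restrict_apply_univ, lt_top_iff_ne_top]; exact volume_ival_ne_top I⟩
  have h2 : MemLp f 2 (volume.restrict (ival I)) := hf.restrict _
  exact memLp_one_iff_integrable.1 (h2.mono_exponent (by norm_num))

lemma integrable_sq_of_L2 {f : ℝ → ℝ} (hf : MemLp f 2 volume) :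
    Integrable (fun x => f x ^ 2) volume := by
  have := hf.integrable_sq
  simpa [sq] using this

lemma integral_sq_eq {μ : Measure ℝ} (f : ℝ → ℝ) (hf : MemLp f 2 μ) :
    ∫ x, f x ^ 2 ∂μ = ((eLpNorm f 2 μ).toReal) ^ 2 := by
  set F := hf.toLp f with hF
  have h1 : ∫ x, f x ^ 2 ∂μ = ∫ x, F x * F x ∂μ := by
    refine integral_congr_ae (hf.coeFn_toLp.mono fun x hx => ?_)
    simp only [hF, hx, sq]
  have h2 : (inner ℝ F F : ℝ) = ∫ x, F x * F x ∂μ := by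
    rw [MeasureTheory.L2.inner_def]
    simp [RCLike.inner_apply]
    simp only [sq]
  rw [h1, ← h2, real_inner_self_eq_norm_sq, Lp.norm_toLp f hf]

lemma sq_integral_le {μ : Measure ℝ} [IsFiniteMeasure μ] (f : ℝ → ℝ) (hf : MemLp f 2 μ) :
    (∫ x, f x ∂μ) ^ 2 ≤ (μ Set.univ).toReal * ∫ x, f x ^ 2 ∂μ := by
  have hone : MemLp (fun _ : ℝ => (1:ℝ)) 2 μ := memLp_const 1
  set F := hf.toLp f with hF
  set O := hone.toLp _ with hO
  have hFO : (inner ℝ F O : ℝ) = ∫ x, f x ∂μ := by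
    rw [MeasureTheory.L2.inner_def]
    refine integral_congr_ae ?_
    filter_upwards [hf.coeFn_toLp, hone.coeFn_toLp] with x h1 h2
    simp only [hF, hO, h1, h2]; simp [RCLike.inner_apply]
  have hFF : (inner ℝ F F : ℝ) = ∫ x, f x ^ 2 ∂μ := by
    rw [real_inner_self_eq_norm_sq, Lp.norm_toLp f hf, ← integral_sq_eq f hf]
  have hOO : (inner ℝ O O : ℝ) = (μ Set.univ).toReal := by
    rw [MeasureTheory.L2.inner_def]
    have h3 : ∫ x, (inner ℝ (O x) (O x) : ℝ) ∂μ = ∫ x, (1:ℝ) ∂μ := by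
      refine integral_congr_ae ?_
      filter_upwards [hone.coeFn_toLp] with x h1
      simp only [hO, h1]; simp [RCLike.inner_apply]
    rw [h3, integral_const, smul_eq_mul, mul_one, measureReal_def]
  have hcs := real_inner_mul_inner_self_le F O
  rw [hFO, hFF, hOO] at hcs
  nlinarith [hcs]

lemma sq_setIntegral_le {f : ℝ → ℝ} (hf : MemLp f 2 volume) (J : D) :
    (∫ x in ival J, f x) ^ 2 ≤ len J * ∫ x in ival J, f x ^ 2 := by
  have : IsFiniteMeasure (volume.restrict (ival J)) :=
    ⟨by rw [Measure.restrict_apply_univ, lt_top_iff_ne_top]; exact volume_ival_ne_top J⟩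
  have h := sq_integral_le f (hf.restrict (ival J))
  rwa [Measure.restrict_apply_univ, volume_ival,
    ENNReal.toReal_ofReal (len_pos J).le] at h

lemma setIntegral_split {f : ℝ → ℝ} (hint : ∀ K : D, IntegrableOn f (ival K) volume) (J : D) :
    ∫ x in ival J, f x = (∫ x in ival (lc J), f x) + ∫ x in ival (rc J), f x := by
  rw [← ival_union J]
  exact setIntegral_union (ival_disj J) (measurableSet_ival (rc J)) (hint (lc J)) (hint (rc J))

/-! ### Splitting dyadic sums over children -/

lemma sum_filter_split (s : Finset D) (J : D) (g : D → ℝ) :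
    ∑ I ∈ s.filter (fun I => ival I ⊆ ival J), g I
      = (if J ∈ s then g J else 0)
        + ((∑ I ∈ s.filter (fun I => ival I ⊆ ival (lc J)), g I)
          + ∑ I ∈ s.filter (fun I => ival I ⊆ ival (rc J)), g I) := by
  classical
  have hlenlc : len (lc J) < len J := by rw [len_lc]; linarith [len_pos J]
  have hlenrc : len (rc J) < len J := by rw [len_rc]; linarith [len_pos J]
  have key : s.filter (fun I => ival I ⊆ ival J)
      = (s.filter (fun I => I = J))
        ∪ (s.filter (fun I => ival I ⊆ ival (lc J))
          ∪ s.filter (fun I => ival I ⊆ ival (rc J))) := by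
    ext I
    simp only [Finset.mem_union, Finset.mem_filter]
    constructor
    · rintro ⟨hI, hsub⟩
      rcases subset_child_or_eq hsub with h | h | h
      · exact Or.inr (Or.inl ⟨hI, h⟩)
      · exact Or.inr (Or.inr ⟨hI, h⟩)
      · exact Or.inl ⟨hI, h⟩
    · rintro (⟨hI, rfl⟩ | ⟨hI, h⟩ | ⟨hI, h⟩)
      · exact ⟨hI, le_refl _⟩
      · exact ⟨hI, h.trans (ival_lc_subset J)⟩
      · exact ⟨hI, h.trans (ival_rc_subset J)⟩
  have d2 : Disjoint (s.filter (fun I => ival I ⊆ ival (lc J)))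
      (s.filter (fun I => ival I ⊆ ival (rc J))) := by
    rw [Finset.disjoint_left]
    intro I h1 h2
    rw [Finset.mem_filter] at h1 h2
    obtain ⟨x, hx⟩ := ival_nonempty I
    exact Set.disjoint_left.1 (ival_disj J) (h1.2 hx) (h2.2 hx)
  have d1 : Disjoint (s.filter (fun I => I = J))
      ((s.filter (fun I => ival I ⊆ ival (lc J))
        ∪ s.filter (fun I => ival I ⊆ ival (rc J)))) := by
    rw [Finset.disjoint_left]
    rintro I h1 h2
    rw [Finset.mem_filter] at h1
    obtain ⟨-, rfl⟩ := h1
    rcases Finset.mem_union.1 h2 with h | h <;> rw [Finset.mem_filter] at h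
    · exact absurd (len_le_of_subset h.2) (not_le.2 hlenlc)
    · exact absurd (len_le_of_subset h.2) (not_le.2 hlenrc)
  rw [key, Finset.sum_union d1, Finset.sum_union d2]
  congr 1
  rw [Finset.filter_eq']
  split_ifs with h
  · rw [Finset.sum_singleton]
  · rw [Finset.sum_empty]

/-! ### The Bellman-function induction for the dyadic Carleson embedding theorem -/

lemma bellman_alg (h aJ A1 A2 f1 f2 F1 F2 S1 S2 : ℝ)
    (hh : 0 < h) (haJ : 0 ≤ aJ) (hA1 : 0 ≤ A1) (hA2 : 0 ≤ A2)
    (hpack : aJ + (A1 + A2) ≤ h)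
    (hS1 : S1 ≤ 4 * F1 - 4 * f1 ^ 2 / (h / 2 + A1))
    (hS2 : S2 ≤ 4 * F2 - 4 * f2 ^ 2 / (h / 2 + A2)) :
    aJ * ((f1 + f2) / h) ^ 2 + (S1 + S2)
      ≤ 4 * (F1 + F2) - 4 * (f1 + f2) ^ 2 / (h + (aJ + (A1 + A2))) := by
  have hu1 : 0 < h / 2 + A1 := by linarith
  have hu2 : 0 < h / 2 + A2 := by linarith
  have hD : 0 < h + (aJ + (A1 + A2)) := by linarith
  have hD' : 0 < h + A1 + A2 := by linarith
  have hcs : (f1 + f2) ^ 2 / (h + A1 + A2) ≤ f1 ^ 2 / (h / 2 + A1) + f2 ^ 2 / (h / 2 + A2) := by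
    rw [div_add_div _ _ hu1.ne' hu2.ne', div_le_div_iff₀ hD' (by positivity)]
    nlinarith [sq_nonneg (f1 * (h / 2 + A2) - f2 * (h / 2 + A1))]
  have hstep : aJ * ((f1 + f2) / h) ^ 2 + 4 * (f1 + f2) ^ 2 / (h + (aJ + (A1 + A2)))
      ≤ 4 * (f1 + f2) ^ 2 / (h + A1 + A2) := by
    set q := (f1 + f2) ^ 2 with hq
    have hq0 : 0 ≤ q := sq_nonneg _
    have e1 : aJ * ((f1 + f2) / h) ^ 2 = aJ * q / h ^ 2 := by
      rw [hq]; field_simp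
    rw [e1, div_add_div _ _ (by positivity) hD.ne', div_le_div_iff₀ (by positivity) hD']
    have hDD : (h + (aJ + (A1 + A2))) * (h + A1 + A2) ≤ 4 * h ^ 2 := by
      nlinarith [mul_le_mul (show h + (aJ + (A1 + A2)) ≤ 2 * h by linarith)
        (show h + A1 + A2 ≤ 2 * h by linarith) hD'.le (by positivity : (0:ℝ) ≤ 2 * h)]
    nlinarith [mul_le_mul_of_nonneg_left hDD (mul_nonneg haJ hq0)]
  have hq4 : 4 * (f1 + f2) ^ 2 / (h + A1 + A2)
      ≤ 4 * (f1 ^ 2 / (h / 2 + A1) + f2 ^ 2 / (h / 2 + A2)) := by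
    calc 4 * (f1 + f2) ^ 2 / (h + A1 + A2) = 4 * ((f1 + f2) ^ 2 / (h + A1 + A2)) := by ring
      _ ≤ 4 * (f1 ^ 2 / (h / 2 + A1) + f2 ^ 2 / (h / 2 + A2)) := by linarith
  have hs1 : 4 * f1 ^ 2 / (h / 2 + A1) = 4 * (f1 ^ 2 / (h / 2 + A1)) := by ring
  have hs2 : 4 * f2 ^ 2 / (h / 2 + A2) = 4 * (f2 ^ 2 / (h / 2 + A2)) := by ring
  linarith [hstep, hq4]

lemma bellman (s : Finset D) (w : D → ℝ) (hw : ∀ I, 0 ≤ w I) (f : ℝ → ℝ)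
    (hf : MemLp f 2 volume)
    (hpack : ∀ J : D, (∑ I ∈ s.filter (fun I => ival I ⊆ ival J), w I * len I) ≤ len J)
    (m₀ : ℤ) (hs : ∀ I ∈ s, m₀ < I.1) :
    ∀ (n : ℕ) (J : D), J.1 ≤ m₀ + n →
      (∑ I ∈ s.filter (fun I => ival I ⊆ ival J), w I * (ip f (haar1 I)) ^ 2)
        ≤ 4 * (∫ x in ival J, f x ^ 2)
          - 4 * (∫ x in ival J, f x) ^ 2
            / (len J + ∑ I ∈ s.filter (fun I => ival I ⊆ ival J), w I * len I) := by
  have hint : ∀ K : D, IntegrableOn f (ival K) volume := integrableOn_of_L2 hf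
  have hint2 : ∀ K : D, IntegrableOn (fun x => f x ^ 2) (ival K) volume :=
    fun K => (integrable_sq_of_L2 hf).integrableOn
  have hA_nonneg : ∀ J : D, 0 ≤ ∑ I ∈ s.filter (fun I => ival I ⊆ ival J), w I * len I :=
    fun J => Finset.sum_nonneg fun I _ => mul_nonneg (hw I) (len_pos I).le
  have hterm_nonneg : ∀ I : D, 0 ≤ w I * (ip f (haar1 I)) ^ 2 :=
    fun I => mul_nonneg (hw I) (sq_nonneg _)
  intro n
  induction n with
  | zero =>
      intro J hJ
      have hempty : s.filter (fun I => ival I ⊆ ival J) = ∅ := by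
        rw [Finset.filter_eq_empty_iff]
        intro I hI hsub
        exact absurd (scale_le_of_subset hsub) (not_le.2 (by have := hs I hI; omega))
      rw [hempty]
      simp only [Finset.sum_empty, add_zero]
      have hCS := sq_setIntegral_le hf J
      have hl := len_pos J
      have hdiv : 4 * (∫ x in ival J, f x) ^ 2 / len J ≤ 4 * ∫ x in ival J, f x ^ 2 := by
        rw [div_le_iff₀ hl]; nlinarith [hCS]
      linarith
  | succ n ih =>
      intro J hJ
      by_cases hJn : J.1 ≤ m₀ + n
      · exact ih J hJn
      · have hJ1 : (lc J).1 ≤ m₀ + n := by simp only [lc]; omega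
        have hJ2 : (rc J).1 ≤ m₀ + n := by simp only [rc]; omega
        have h1 := ih (lc J) hJ1
        have h2 := ih (rc J) hJ2
        have hsplitS := sum_filter_split s J (fun I => w I * (ip f (haar1 I)) ^ 2)
        have hsplitA := sum_filter_split s J (fun I => w I * len I)
        have hsplitf := setIntegral_split hint J
        have hsplitf2 := setIntegral_split hint2 J
        set aJ : ℝ := if J ∈ s then w J * len J else 0 with haJdef
        have haJ : 0 ≤ aJ := by
          rw [haJdef]; split_ifs
          · exact mul_nonneg (hw J) (len_pos J).le
          · exact le_refl 0
        have hifS : (if J ∈ s then w J * (ip f (haar1 J)) ^ 2 else 0)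
            = aJ * ((∫ x in ival J, f x) / len J) ^ 2 := by
          rw [haJdef]
          split_ifs with h
          · rw [ip_haar1_eq]
            have hl := len_pos J
            have hsq : ((Real.sqrt (len J))⁻¹) ^ 2 = (len J)⁻¹ := by
              rw [inv_pow, Real.sq_sqrt hl.le]
            rw [mul_pow, hsq, div_pow]
            field_simp
          · ring
        have halg := bellman_alg (len J) aJ
          (∑ I ∈ s.filter (fun I => ival I ⊆ ival (lc J)), w I * len I)
          (∑ I ∈ s.filter (fun I => ival I ⊆ ival (rc J)), w I * len I)
          (∫ x in ival (lc J), f x) (∫ x in ival (rc J), f x)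
          (∫ x in ival (lc J), f x ^ 2) (∫ x in ival (rc J), f x ^ 2)
          (∑ I ∈ s.filter (fun I => ival I ⊆ ival (lc J)), w I * (ip f (haar1 I)) ^ 2)
          (∑ I ∈ s.filter (fun I => ival I ⊆ ival (rc J)), w I * (ip f (haar1 I)) ^ 2)
          (len_pos J) haJ (hA_nonneg (lc J)) (hA_nonneg (rc J))
          (by rw [haJdef, ← hsplitA]; exact hpack J)
          (by rw [← len_lc J]; exact h1)
          (by rw [← len_rc J]; exact h2)
        rw [hsplitS, hifS, hsplitA, hsplitf, hsplitf2]
        linarith [halg]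


/-- The dyadic Carleson embedding theorem (finite version). -/
lemma carleson (s : Finset D) (w : D → ℝ) (hw : ∀ I, 0 ≤ w I)
    (hpack : ∀ J : D, (∑ I ∈ s.filter (fun I => ival I ⊆ ival J), w I * len I) ≤ len J)
    (f : ℝ → ℝ) (hf : MemLp f 2 volume) :
    ∑ I ∈ s, w I * (ip f (haar1 I)) ^ 2 ≤ 4 * ∫ x, f x ^ 2 := by
  classical
  have hint_nonneg : (0:ℝ) ≤ ∫ x, f x ^ 2 := integral_nonneg fun x => sq_nonneg _
  rcases Finset.eq_empty_or_nonempty s with rfl | hne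
  · simpa using by positivity
  set m₀ : ℤ := (s.image Prod.fst).min' (hne.image _) - 1 with hm
  have hs : ∀ I ∈ s, m₀ < I.1 := fun I hI => by
    have := Finset.min'_le (s.image Prod.fst) I.1 (Finset.mem_image_of_mem _ hI)
    omega
  have hbell : ∀ J : D, (∑ I ∈ s.filter (fun I => ival I ⊆ ival J), w I * (ip f (haar1 I)) ^ 2)
      ≤ 4 * ∫ x in ival J, f x ^ 2 := by
    intro J
    have hn : J.1 ≤ m₀ + ((J.1 - m₀).toNat : ℤ) := by omega
    have h := bellman s w hw f hf hpack m₀ hs (J.1 - m₀).toNat J hn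
    have hden : 0 < len J + ∑ I ∈ s.filter (fun I => ival I ⊆ ival J), w I * len I := by
      have h0 : (0:ℝ) ≤ ∑ I ∈ s.filter (fun I => ival I ⊆ ival J), w I * len I :=
        Finset.sum_nonneg fun I _ => mul_nonneg (hw I) (len_pos I).le
      linarith [len_pos J]
    have h2 : 0 ≤ 4 * (∫ x in ival J, f x) ^ 2
        / (len J + ∑ I ∈ s.filter (fun I => ival I ⊆ ival J), w I * len I) := by positivity
    linarith
  set M : ℝ := s.sup' hne (fun I => ((|I.2| : ℝ) + 1) * 2 ^ I.1) with hM
  obtain ⟨nn, hnn⟩ := pow_unbounded_of_one_lt M (by norm_num : (1:ℝ) < 2)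
  set N : ℤ := (nn : ℤ) with hN
  have hNpow : (2:ℝ) ^ N = 2 ^ nn := zpow_natCast 2 nn
  have hcover : ∀ I ∈ s, ival I ⊆ ival (N, (0:ℤ)) ∨ ival I ⊆ ival (N, (-1:ℤ)) := by
    intro I hI
    have hMI : ((|I.2| : ℝ) + 1) * 2 ^ I.1 ≤ M := by
      rw [hM]; exact Finset.le_sup' (fun I : D => ((|I.2| : ℝ) + 1) * 2 ^ I.1) hI
    have hMN : ((|I.2| : ℝ) + 1) * 2 ^ I.1 < 2 ^ N := by
      rw [hNpow]; exact lt_of_le_of_lt hMI hnn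
    have hpI : (0:ℝ) < 2 ^ I.1 := zpow_pos (by norm_num) _
    rcases le_or_gt 0 I.2 with hk | hk
    · left
      have hk' : (0:ℝ) ≤ (I.2 : ℝ) := by exact_mod_cast hk
      have habs : |(I.2 : ℝ)| = (I.2 : ℝ) := abs_of_nonneg hk'
      rintro x ⟨hx1, hx2⟩
      simp only [ival]
      constructor
      · push_cast; nlinarith
      · push_cast; nlinarith [habs ▸ hMN]
    · right
      have hk1 : (I.2 : ℝ) + 1 ≤ 0 := by exact_mod_cast Int.add_one_le_iff.mpr hk
      have habs : |(I.2 : ℝ)| = -(I.2 : ℝ) := abs_of_neg (by exact_mod_cast hk)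
      rintro x ⟨hx1, hx2⟩
      simp only [ival]
      constructor
      · push_cast; nlinarith [habs ▸ hMN]
      · push_cast; nlinarith
  have hdisjtop : Disjoint (ival (N, (0:ℤ))) (ival (N, (-1:ℤ))) := by
    simp only [ival]
    rw [Set.Ico_disjoint_Ico]
    refine le_trans (min_le_right _ _) (le_trans (le_of_eq ?_) (le_max_left _ _))
    push_cast; ring
  have hsplit : s = s.filter (fun I => ival I ⊆ ival (N, (0:ℤ)))
      ∪ s.filter (fun I => ival I ⊆ ival (N, (-1:ℤ))) := by
    ext I
    simp only [Finset.mem_union, Finset.mem_filter]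
    constructor
    · intro hI
      rcases hcover I hI with h | h
      · exact Or.inl ⟨hI, h⟩
      · exact Or.inr ⟨hI, h⟩
    · rintro (⟨hI, -⟩ | ⟨hI, -⟩) <;> exact hI
  have hsum : ∑ I ∈ s, w I * (ip f (haar1 I)) ^ 2
      ≤ (∑ I ∈ s.filter (fun I => ival I ⊆ ival (N, (0:ℤ))), w I * (ip f (haar1 I)) ^ 2)
        + ∑ I ∈ s.filter (fun I => ival I ⊆ ival (N, (-1:ℤ))), w I * (ip f (haar1 I)) ^ 2 := by
    have hui := Finset.sum_union_inter (s₁ := s.filter (fun I => ival I ⊆ ival (N, (0:ℤ))))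
      (s₂ := s.filter (fun I => ival I ⊆ ival (N, (-1:ℤ))))
      (f := fun I => w I * (ip f (haar1 I)) ^ 2)
    have hinter : (0:ℝ) ≤ ∑ I ∈ (s.filter (fun I => ival I ⊆ ival (N, (0:ℤ))))
        ∩ (s.filter (fun I => ival I ⊆ ival (N, (-1:ℤ)))), w I * (ip f (haar1 I)) ^ 2 :=
      Finset.sum_nonneg fun I _ => mul_nonneg (hw I) (sq_nonneg _)
    calc ∑ I ∈ s, w I * (ip f (haar1 I)) ^ 2
        = ∑ I ∈ (s.filter (fun I => ival I ⊆ ival (N, (0:ℤ))))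
            ∪ (s.filter (fun I => ival I ⊆ ival (N, (-1:ℤ)))), w I * (ip f (haar1 I)) ^ 2 := by
          rw [← hsplit]
      _ ≤ _ := by linarith [hui]
  have hIf2 : (∫ x in ival (N, (0:ℤ)), f x ^ 2) + (∫ x in ival (N, (-1:ℤ)), f x ^ 2)
      ≤ ∫ x, f x ^ 2 := by
    have hu : ∫ x in (ival (N, (0:ℤ)) ∪ ival (N, (-1:ℤ))), f x ^ 2
        = (∫ x in ival (N, (0:ℤ)), f x ^ 2) + ∫ x in ival (N, (-1:ℤ)), f x ^ 2 :=
      setIntegral_union hdisjtop (measurableSet_ival _)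
        ((integrable_sq_of_L2 hf).integrableOn) ((integrable_sq_of_L2 hf).integrableOn)
    rw [← hu]
    exact setIntegral_le_integral (integrable_sq_of_L2 hf)
      (Filter.Eventually.of_forall fun x => sq_nonneg _)
  linarith [hsum, hbell (N, (0:ℤ)), hbell (N, (-1:ℤ)), hIf2]


/-! ### Unit vectors and test functions -/

lemma haar1_as_indicator (J : D) :
    haar1 J = (ival J).indicator (fun _ => (Real.sqrt (len J))⁻¹) := by
  funext x
  unfold haar1
  by_cases hx : x ∈ ival J
  · rw [Set.indicator_of_mem hx, Set.indicator_of_mem hx, mul_one]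
  · rw [Set.indicator_of_notMem hx, Set.indicator_of_notMem hx, mul_zero]

lemma memℒp_haar1 (J : D) : MemLp (haar1 J) 2 volume := by
  rw [haar1_as_indicator]
  exact memLp_indicator_const 2 (measurableSet_ival J) _ (Or.inr (volume_ival_ne_top J))

lemma eLpNorm_haar1 (J : D) : eLpNorm (haar1 J) 2 volume = 1 := by
  rw [haar1_as_indicator,
    eLpNorm_indicator_const (measurableSet_ival J) (by norm_num) (by norm_num)]
  rw [volume_ival]
  have h1 : (ENNReal.ofReal (len J)) ^ (1 / (2:ℝ≥0∞).toReal)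
      = ENNReal.ofReal (Real.sqrt (len J)) := by
    rw [ENNReal.toReal_ofNat, ENNReal.ofReal_rpow_of_pos (len_pos J), ← Real.sqrt_eq_rpow]
  rw [h1]
  have h2 : (‖(Real.sqrt (len J))⁻¹‖ₑ : ℝ≥0∞)
      = ENNReal.ofReal ((Real.sqrt (len J))⁻¹) := by
    rw [← ofReal_norm, Real.norm_eq_abs, abs_of_nonneg (by positivity)]
  rw [h2, ← ENNReal.ofReal_mul (by positivity),
    inv_mul_cancel₀ (sqrt_len_pos J).ne', ENNReal.ofReal_one]

lemma unit_haar1 (J : D) : UnitL2 (haar1 J) := ⟨memℒp_haar1 J, eLpNorm_haar1 J⟩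

instance : Nonempty {f : ℝ → ℝ // UnitL2 f} := ⟨⟨haar1 (0, 0), unit_haar1 _⟩⟩

lemma integral_sq_of_unit {f : ℝ → ℝ} (hf : UnitL2 f) : ∫ x, f x ^ 2 = 1 := by
  rw [integral_sq_eq f hf.1, hf.2]
  norm_num

lemma ip_haar1_haar1 {I J : D} (h : ival I ⊆ ival J) :
    ip (haar1 J) (haar1 I) = Real.sqrt (len I) / Real.sqrt (len J) := by
  rw [ip_haar1_eq]
  have h1 : ∫ x in ival I, haar1 J x = (Real.sqrt (len J))⁻¹ * len I := by
    have h2 : ∀ x ∈ ival I, haar1 J x = (Real.sqrt (len J))⁻¹ := by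
      intro x hx
      unfold haar1
      rw [Set.indicator_of_mem (h hx), mul_one]
    rw [setIntegral_congr_fun (measurableSet_ival I) h2, setIntegral_const, measureReal_def, volume_ival,
      ENNReal.toReal_ofReal (len_pos I).le, smul_eq_mul, mul_comm]
  rw [h1, ← Real.mul_self_sqrt (len_pos I).le]
  field_simp
  rw [Real.sqrt_sq (Real.sqrt_nonneg _), sq, mul_div_mul_left _ _ (sqrt_len_pos I).ne']

/-! ### Properties of the Carleson norm -/

lemma carl_term_le (s : Finset D) (a : D → ℝ) (J : D) :
    Real.sqrt ((len J)⁻¹ * ∑ I ∈ s.filter (fun I => ival I ⊆ ival J), a I ^ 2 * len I)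
      ≤ Real.sqrt (∑ I ∈ s, a I ^ 2) := by
  apply Real.sqrt_le_sqrt
  have h1 : ∑ I ∈ s.filter (fun I => ival I ⊆ ival J), a I ^ 2 * len I
      ≤ ∑ I ∈ s.filter (fun I => ival I ⊆ ival J), a I ^ 2 * len J := by
    refine Finset.sum_le_sum fun I hI => ?_
    have hsub := (Finset.mem_filter.1 hI).2
    exact mul_le_mul_of_nonneg_left (len_le_of_subset hsub) (sq_nonneg _)
  have h2 : ∑ I ∈ s.filter (fun I => ival I ⊆ ival J), a I ^ 2 * len J
      ≤ (∑ I ∈ s, a I ^ 2) * len J := by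
    rw [← Finset.sum_mul]
    refine mul_le_mul_of_nonneg_right ?_ (len_pos J).le
    exact Finset.sum_le_sum_of_subset_of_nonneg (Finset.filter_subset _ _)
      fun I _ _ => sq_nonneg _
  have hJ := len_pos J
  calc (len J)⁻¹ * ∑ I ∈ s.filter (fun I => ival I ⊆ ival J), a I ^ 2 * len I
      ≤ (len J)⁻¹ * ((∑ I ∈ s, a I ^ 2) * len J) := by
        apply mul_le_mul_of_nonneg_left (le_trans h1 h2) (inv_nonneg.2 (len_pos J).le)
    _ = ∑ I ∈ s, a I ^ 2 := by field_simp

lemma carl_bddAbove (s : Finset D) (a : D → ℝ) :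
    BddAbove (Set.range fun J : D =>
      Real.sqrt ((len J)⁻¹ * ∑ I ∈ s.filter (fun I => ival I ⊆ ival J), a I ^ 2 * len I)) := by
  refine ⟨Real.sqrt (∑ I ∈ s, a I ^ 2), ?_⟩
  rintro x ⟨J, rfl⟩
  exact carl_term_le s a J

lemma carlOn_nonneg (s : Finset D) (a : D → ℝ) : 0 ≤ carlOn s a :=
  Real.iSup_nonneg fun J => Real.sqrt_nonneg _

lemma carl_term_le_carlOn (s : Finset D) (a : D → ℝ) (J : D) :
    Real.sqrt ((len J)⁻¹ * ∑ I ∈ s.filter (fun I => ival I ⊆ ival J), a I ^ 2 * len I)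
      ≤ carlOn s a :=
  le_ciSup (carl_bddAbove s a) J

lemma carl_packing (s : Finset D) (a : D → ℝ) (J : D) :
    (∑ I ∈ s.filter (fun I => ival I ⊆ ival J), a I ^ 2 * len I)
      ≤ (carlOn s a) ^ 2 * len J := by
  have h0 : 0 ≤ (len J)⁻¹ * ∑ I ∈ s.filter (fun I => ival I ⊆ ival J), a I ^ 2 * len I := by
    refine mul_nonneg (inv_nonneg.2 (len_pos J).le) (Finset.sum_nonneg fun I _ =>
      mul_nonneg (sq_nonneg _) (len_pos I).le)
  have h1 := carl_term_le_carlOn s a J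
  have h2 : (len J)⁻¹ * ∑ I ∈ s.filter (fun I => ival I ⊆ ival J), a I ^ 2 * len I
      ≤ (carlOn s a) ^ 2 := by
    have := pow_le_pow_left₀ (Real.sqrt_nonneg _) h1 2
    rwa [Real.sq_sqrt h0] at this
  have hJ := len_pos J
  calc (∑ I ∈ s.filter (fun I => ival I ⊆ ival J), a I ^ 2 * len I)
      = len J * ((len J)⁻¹ * ∑ I ∈ s.filter (fun I => ival I ⊆ ival J), a I ^ 2 * len I) := by
        field_simp
    _ ≤ len J * (carlOn s a) ^ 2 := mul_le_mul_of_nonneg_left h2 hJ.le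
    _ = (carlOn s a) ^ 2 * len J := by ring

/-- The operator norm of `P^{0,0}_{b,1} T_σ P^{0,1}_{β,0}` is independent of
the choice of signs `σ` and is equivalent to the Carleson norm of
`{⟨b,h¹_I⟩⟨β,h_I⟩/|I|}`. -/
theorem statement17 :
    ∃ c C : ℝ, 0 < c ∧ 0 < C ∧
      ∀ (b β : ℝ → ℝ) (cb cβ : D →₀ ℝ), FinHaar b cb → FinHaar β cβ →
        ∀ σ : D → ℝ, (∀ I, σ I = 1 ∨ σ I = -1) →
          (∀ σ' : D → ℝ, (∀ I, σ' I = 1 ∨ σ' I = -1) →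
            opNorm (fun f => Pb (cb.support ∪ cβ.support) false false true b
              (⇑(Tfull σ (Pb cβ.support false true false β f)))) = opNorm (fun f => Pb (cb.support ∪ cβ.support) false false true b
              (⇑(Tfull σ' (Pb cβ.support false true false β f))))) ∧
          c * carlOn cβ.support (fun I => ip b (haar1 I) * ip β (haar I) / len I) ≤
            opNorm (fun f => Pb (cb.support ∪ cβ.support) false false true b
              (⇑(Tfull σ (Pb cβ.support false true false β f)))) ∧
          opNorm (fun f => Pb (cb.support ∪ cβ.support) false false true b
              (⇑(Tfull σ (Pb cβ.support false true false β f)))) ≤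
            C * carlOn cβ.support (fun I => ip b (haar1 I) * ip β (haar I) / len I) := by
  classical
  refine ⟨1, 2, one_pos, two_pos, ?_⟩
  intro b β cb cβ _ _ σ hσ
  set s := cβ.support with hsdef
  set S := cb.support ∪ cβ.support with hSdef
  have hsS : s ⊆ S := Finset.subset_union_right
  set a : D → ℝ := fun I => ip b (haar1 I) * ip β (haar I) / len I with ha
  have hkey : ∀ (τ : D → ℝ), (∀ I, τ I = 1 ∨ τ I = -1) → ∀ f : ℝ → ℝ,
      l2normSq (Pb S false false true b (⇑(Tfull τ (Pb s false true false β f))))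
        = ∑ I ∈ s, a I ^ 2 * (ip f (haar1 I)) ^ 2 := by
    intro τ hτ f
    rw [key_identity b β s S hsS τ hτ f]
  have hop : ∀ (τ : D → ℝ), (∀ I, τ I = 1 ∨ τ I = -1) →
      opNorm (fun f => Pb S false false true b (⇑(Tfull τ (Pb s false true false β f))))
        = ⨆ f : {f : ℝ → ℝ // UnitL2 f},
            Real.sqrt (∑ I ∈ s, a I ^ 2 * (ip f.1 (haar1 I)) ^ 2) := by
    intro τ hτ
    unfold opNorm
    exact iSup_congr fun f => by rw [hkey τ hτ f.1]
  have hcarl0 : 0 ≤ carlOn s a := carlOn_nonneg s a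
  have hub : ∀ f : {f : ℝ → ℝ // UnitL2 f},
      Real.sqrt (∑ I ∈ s, a I ^ 2 * (ip f.1 (haar1 I)) ^ 2) ≤ 2 * carlOn s a := by
    intro f
    have hQle : (∑ I ∈ s, a I ^ 2 * (ip f.1 (haar1 I)) ^ 2) ≤ 4 * (carlOn s a) ^ 2 := by
      by_cases hc : carlOn s a = 0
      · have hzero : ∀ I ∈ s, a I = 0 := by
          intro I hI
          have hp := carl_packing s a I
          rw [hc] at hp
          have hmem : I ∈ s.filter (fun K => ival K ⊆ ival I) :=
            Finset.mem_filter.2 ⟨hI, subset_refl _⟩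
          have hsingle : a I ^ 2 * len I
              ≤ ∑ K ∈ s.filter (fun K => ival K ⊆ ival I), a K ^ 2 * len K :=
            Finset.single_le_sum (f := fun K => a K ^ 2 * len K)
              (fun K _ => mul_nonneg (sq_nonneg _) (len_pos K).le) hmem
          have h3 : a I ^ 2 = 0 := le_antisymm (by nlinarith [len_pos I]) (sq_nonneg _)
          exact (pow_eq_zero_iff (by norm_num : (2:ℕ) ≠ 0)).1 h3
        have hQ0 : (∑ I ∈ s, a I ^ 2 * (ip f.1 (haar1 I)) ^ 2) = 0 :=
          Finset.sum_eq_zero fun I hI => by rw [hzero I hI]; ring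
        rw [hQ0, hc]; norm_num
      · have hcpos : 0 < carlOn s a := lt_of_le_of_ne hcarl0 (Ne.symm hc)
        have hw : ∀ I, 0 ≤ a I ^ 2 / (carlOn s a) ^ 2 := fun I => by positivity
        have hpack : ∀ J : D,
            (∑ I ∈ s.filter (fun I => ival I ⊆ ival J), (a I ^ 2 / (carlOn s a) ^ 2) * len I)
              ≤ len J := by
          intro J
          have hp := carl_packing s a J
          have he : ∑ I ∈ s.filter (fun I => ival I ⊆ ival J),
                (a I ^ 2 / (carlOn s a) ^ 2) * len I
              = (∑ I ∈ s.filter (fun I => ival I ⊆ ival J), a I ^ 2 * len I)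
                / (carlOn s a) ^ 2 := by
            rw [Finset.sum_div]; exact Finset.sum_congr rfl fun I _ => by ring
          rw [he, div_le_iff₀ (by positivity)]
          nlinarith [hp]
        have hcarleson := carleson s (fun I => a I ^ 2 / (carlOn s a) ^ 2) hw hpack f.1 f.2.1
        rw [integral_sq_of_unit f.2] at hcarleson
        have hQc : (∑ I ∈ s, (a I ^ 2 / (carlOn s a) ^ 2) * (ip f.1 (haar1 I)) ^ 2)
            = (∑ I ∈ s, a I ^ 2 * (ip f.1 (haar1 I)) ^ 2) / (carlOn s a) ^ 2 := by
          rw [Finset.sum_div]; exact Finset.sum_congr rfl fun I _ => by ring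
        rw [hQc, div_le_iff₀ (by positivity)] at hcarleson
        nlinarith [hcarleson]
    calc Real.sqrt (∑ I ∈ s, a I ^ 2 * (ip f.1 (haar1 I)) ^ 2)
        ≤ Real.sqrt (4 * (carlOn s a) ^ 2) := Real.sqrt_le_sqrt hQle
      _ = 2 * carlOn s a := by
          rw [show 4 * (carlOn s a) ^ 2 = (2 * carlOn s a) ^ 2 by ring,
            Real.sqrt_sq (by positivity)]
  have hbdd : BddAbove (Set.range fun f : {f : ℝ → ℝ // UnitL2 f} =>
      Real.sqrt (∑ I ∈ s, a I ^ 2 * (ip f.1 (haar1 I)) ^ 2)) :=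
    ⟨2 * carlOn s a, by rintro x ⟨f, rfl⟩; exact hub f⟩
  refine ⟨fun σ' hσ' => by rw [hop σ hσ, hop σ' hσ'], ?_, ?_⟩
  · rw [hop σ hσ, one_mul]
    unfold carlOn
    refine ciSup_le fun J => ?_
    have e1 : (len J)⁻¹ * ∑ I ∈ s.filter (fun I => ival I ⊆ ival J), a I ^ 2 * len I
        = ∑ I ∈ s.filter (fun I => ival I ⊆ ival J),
            a I ^ 2 * (ip (haar1 J) (haar1 I)) ^ 2 := by
      rw [Finset.mul_sum]
      refine Finset.sum_congr rfl fun I hI => ?_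
      have hsub := (Finset.mem_filter.1 hI).2
      have hIp : (Real.sqrt (len I) / Real.sqrt (len J)) ^ 2 = len I / len J := by
        rw [div_pow, Real.sq_sqrt (len_pos I).le, Real.sq_sqrt (len_pos J).le]
      rw [ip_haar1_haar1 hsub, hIp]
      have hI0 := (len_pos I).ne'
      have hJ0 := (len_pos J).ne'
      field_simp
    have h1 : Real.sqrt ((len J)⁻¹ *
          ∑ I ∈ s.filter (fun I => ival I ⊆ ival J), a I ^ 2 * len I)
        ≤ Real.sqrt (∑ I ∈ s, a I ^ 2 * (ip (haar1 J) (haar1 I)) ^ 2) := by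
      rw [e1]
      exact Real.sqrt_le_sqrt (Finset.sum_le_sum_of_subset_of_nonneg
        (Finset.filter_subset _ _) fun I _ _ => mul_nonneg (sq_nonneg _) (sq_nonneg _))
    exact le_trans h1 (le_ciSup hbdd (⟨haar1 J, unit_haar1 J⟩ : {f : ℝ → ℝ // UnitL2 f}))
  · rw [hop σ hσ]
    exact ciSup_le hub

end RandomParaproducts
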